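/- For every real K ≥ 5 and every η ≥ 1, the standard normal cumulative distribution function satisfies Φ( Φ⁻¹(1 − 1/K) + η ) ≥ 1 − (1/K) · √(π/2) · e^{−η²/2} · e^{−η √( ln( K² / (4π ln K) ) )}. -/

import Mathlib

open MeasureTheory Metric Finset
open Filter Set
open scoped ComplexOrder

noncomputable section

/-- Standard normal cumulative distribution function. -/
def stdPhi (x : ℝ) : ℝ := ∫ u in Set.Iic x, Real.exp (-u ^ 2 / 2) / Real.sqrt (2 * Real.pi)

open Classical in
/-- Inverse of the standard normal CDF (defined via choice; on `(0,1)` it is the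
genuine inverse since `stdPhi` is a strictly monotone bijection onto `(0,1)`). -/
def stdPhiInv (p : ℝ) : ℝ := if h : ∃ x, stdPhi x = p then h.choose else 0

noncomputable def gauss (u : ℝ) : ℝ := Real.exp (-u ^ 2 / 2) / Real.sqrt (2 * Real.pi)

lemma gauss_pos (u : ℝ) : 0 < gauss u := by
  unfold gauss; positivity

lemma gauss_integrable : Integrable gauss := by
  have h := integrable_exp_neg_mul_sq (b := (1/2 : ℝ)) (by norm_num)
  have : gauss = fun u => Real.exp (-(1/2) * u ^ 2) * (Real.sqrt (2 * Real.pi))⁻¹ := by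
    funext u; unfold gauss; rw [div_eq_mul_inv]; ring_nf
  rw [this]
  exact h.mul_const _

lemma gauss_integral : ∫ u, gauss u = 1 := by
  have h := integral_gaussian (1/2 : ℝ)
  have e : gauss = fun u => Real.exp (-(1/2) * u ^ 2) * (Real.sqrt (2 * Real.pi))⁻¹ := by
    funext u; unfold gauss; rw [div_eq_mul_inv]; ring_nf
  rw [e, integral_mul_const, h]
  rw [show Real.pi / (1/2) = 2 * Real.pi by ring]
  exact mul_inv_cancel₀ (by positivity)

noncomputable def Tl (x : ℝ) : ℝ := ∫ u in Set.Ioi x, gauss u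

lemma Tl_add (x : ℝ) : (∫ u in Set.Iic x, gauss u) + Tl x = 1 := by
  unfold Tl
  rw [← Set.compl_Iic]
  rw [integral_add_compl measurableSet_Iic gauss_integrable, gauss_integral]

lemma Tl_lt {x y : ℝ} (h : x < y) : Tl y < Tl x := by
  unfold Tl
  rw [← Set.Ioc_union_Ioi_eq_Ioi h.le]
  rw [setIntegral_union (Set.Ioc_disjoint_Ioi le_rfl) measurableSet_Ioi
    gauss_integrable.integrableOn gauss_integrable.integrableOn]
  have : 0 < ∫ u in Set.Ioc x y, gauss u := by
    rw [← intervalIntegral.integral_of_le h.le]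
    exact intervalIntegral.intervalIntegral_pos_of_pos_on
      gauss_integrable.intervalIntegrable (fun u _ => gauss_pos u) h
  linarith

lemma stdPhi_continuous : Continuous stdPhi := by
  have h : ∀ x, stdPhi x = (∫ t in (0:ℝ)..x, gauss t) + stdPhi 0 := by
    intro x
    have := intervalIntegral.integral_Iic_sub_Iic
      (gauss_integrable.integrableOn (s := Set.Iic (0:ℝ)))
      (gauss_integrable.integrableOn (s := Set.Iic x))
    unfold stdPhi gauss at *
    linarith [this]
  have : stdPhi = fun x => (∫ t in (0:ℝ)..x, gauss t) + stdPhi 0 := funext h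
  rw [this]
  exact (gauss_integrable.continuous_primitive 0).add continuous_const

lemma stdPhi_tendsto_one : Filter.Tendsto stdPhi Filter.atTop (nhds 1) := by
  have h := (aecover_Iic (μ := (volume : Measure ℝ))
    (tendsto_id (α := ℝ))).integral_tendsto_of_countably_generated gauss_integrable
  rw [gauss_integral] at h
  exact h

lemma stdPhi_tendsto_zero : Filter.Tendsto stdPhi Filter.atBot (nhds 0) := by
  have h := (aecover_Ioi (μ := (volume : Measure ℝ))
    (tendsto_id (α := ℝ) (x := Filter.atBot))).integral_tendsto_of_countably_generated gauss_integrable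
  rw [gauss_integral] at h
  have : stdPhi = fun x => 1 - Tl x := by
    funext x; have h2 := Tl_add x; unfold stdPhi Tl gauss at *; linarith
  rw [this]
  have : Filter.Tendsto Tl Filter.atBot (nhds 1) := h
  simpa using (tendsto_const_nhds (x := (1:ℝ)) (f := Filter.atBot)).sub this

lemma exists_stdPhi_eq {p : ℝ} (hp0 : 0 < p) (hp1 : p < 1) : ∃ x, stdPhi x = p := by
  obtain ⟨x₂, hx₂⟩ := (stdPhi_tendsto_one.eventually_const_lt hp1).exists
  obtain ⟨x₁, hx₁, hx₁₂⟩ :=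
    ((stdPhi_tendsto_zero.eventually_lt_const hp0).and (Filter.eventually_le_atBot x₂)).exists
  have := intermediate_value_Icc hx₁₂ stdPhi_continuous.continuousOn
  obtain ⟨x, _, hx⟩ := this ⟨hx₁.le, hx₂.le⟩
  exact ⟨x, hx⟩

lemma gauss_shift (u η : ℝ) : gauss (u + η) = Real.exp (-(η * u) - η ^ 2 / 2) * gauss u := by
  unfold gauss
  rw [mul_div_assoc', mul_comm]
  congr 1
  rw [← Real.exp_add]
  congr 1
  ring

lemma Tl_translate (x η : ℝ) : Tl (x + η) = ∫ u in Set.Ioi x, gauss (u + η) := by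
  unfold Tl
  rw [← integral_indicator measurableSet_Ioi, ← integral_indicator measurableSet_Ioi]
  rw [← integral_add_right_eq_self (fun u => (Set.Ioi (x + η)).indicator gauss u) η]
  congr 1
  funext u
  by_cases h : x < u
  · rw [Set.indicator_of_mem (by simpa using h), Set.indicator_of_mem (by simpa using h)]
  · rw [Set.indicator_of_notMem (by simpa using h), Set.indicator_of_notMem (by simpa using h)]

lemma Tl_shift (x η : ℝ) (hη : 0 ≤ η) : Tl (x + η) ≤ Real.exp (-(η * x) - η ^ 2 / 2) * Tl x := by
  rw [Tl_translate]
  unfold Tl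
  rw [← integral_const_mul]
  apply setIntegral_mono_on
  · exact (gauss_integrable.comp_add_right η).integrableOn
  · exact (gauss_integrable.const_mul _).integrableOn
  · exact measurableSet_Ioi
  · intro u hu
    rw [gauss_shift]
    have : Real.exp (-(η * u) - η ^ 2 / 2) ≤ Real.exp (-(η * x) - η ^ 2 / 2) := by
      apply Real.exp_le_exp.2
      have : η * x ≤ η * u := mul_le_mul_of_nonneg_left (le_of_lt hu) hη
      linarith
    exact mul_le_mul_of_nonneg_right this (gauss_pos u).le

lemma gauss_hasDeriv (u : ℝ) : HasDerivAt gauss (-u * gauss u) u := by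
  have h1 : HasDerivAt (fun u : ℝ => -u ^ 2 / 2) (-u) u := by
    have := ((hasDerivAt_pow 2 u).neg.div_const 2)
    refine this.congr_deriv ?_
    ring
  have h2 := (h1.exp).div_const (Real.sqrt (2 * Real.pi))
  refine h2.congr_deriv ?_
  unfold gauss
  ring

noncomputable def sfun (u : ℝ) : ℝ := Real.sqrt (u ^ 2 + 5/2)

lemma sfun_pos (u : ℝ) : 0 < sfun u := Real.sqrt_pos.2 (by positivity)

lemma sfun_sq (u : ℝ) : sfun u ^ 2 = u ^ 2 + 5/2 := Real.sq_sqrt (by positivity)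

lemma sfun_hasDeriv (u : ℝ) : HasDerivAt sfun (u / sfun u) u := by
  have h1 : HasDerivAt (fun u : ℝ => u ^ 2 + 5/2) (2 * u) u := by
    simpa using (hasDerivAt_pow 2 u).add_const (5/2 : ℝ)
  have h2 := h1.sqrt (by positivity)
  refine h2.congr_deriv ?_
  unfold sfun
  field_simp

noncomputable def Ffun (u : ℝ) : ℝ := gauss u / sfun u

noncomputable def Gfun (u : ℝ) : ℝ :=
  ((-u * gauss u) * sfun u - gauss u * (u / sfun u)) / sfun u ^ 2

lemma Ffun_hasDeriv (u : ℝ) : HasDerivAt Ffun (Gfun u) u :=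
  (gauss_hasDeriv u).div (sfun_hasDeriv u) (sfun_pos u).ne'

lemma Gfun_eq (u : ℝ) : Gfun u = -(u * (u ^ 2 + 7/2) / sfun u ^ 3 * gauss u) := by
  unfold Gfun
  have hs := sfun_pos u
  have hsq := sfun_sq u
  field_simp
  linear_combination (-(2*u*gauss u)) * hsq

lemma key_ineq {u : ℝ} (hu : 0 ≤ u) : u * (u ^ 2 + 7/2) ≤ sfun u ^ 3 := by
  have hs := sfun_pos u
  have hsq := sfun_sq u
  have hus : u < sfun u := by
    nlinarith
  nlinarith [mul_pos (mul_pos hs hs) (sub_pos.2 hus), sq_nonneg (sfun u - u), sq_nonneg (sfun u + u), mul_nonneg hu (sq_nonneg (sfun u - u))]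

lemma neg_Gfun_le {u : ℝ} (hu : 0 ≤ u) : -Gfun u ≤ gauss u := by
  rw [Gfun_eq, neg_neg]
  have h1 : u * (u ^ 2 + 7/2) / sfun u ^ 3 ≤ 1 := by
    rw [div_le_one (pow_pos (sfun_pos u) 3)]
    exact key_ineq hu
  nlinarith [gauss_pos u, key_ineq hu, sfun_pos u]

lemma Gfun_nonpos {u : ℝ} (hu : 0 ≤ u) : Gfun u ≤ 0 := by
  rw [Gfun_eq]
  have : 0 ≤ u * (u ^ 2 + 7/2) / sfun u ^ 3 * gauss u :=
    mul_nonneg (div_nonneg (by positivity) (pow_nonneg (sfun_pos u).le 3)) (gauss_pos u).le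
  linarith

lemma gauss_continuous : Continuous gauss := by
  unfold gauss
  fun_prop

lemma Gfun_measurable : Measurable Gfun := by
  unfold Gfun sfun gauss
  fun_prop

lemma Ffun_tendsto : Filter.Tendsto Ffun Filter.atTop (nhds 0) := by
  have hg : Filter.Tendsto gauss Filter.atTop (nhds 0) := by
    unfold gauss
    rw [show (0:ℝ) = 0 / Real.sqrt (2 * Real.pi) by simp]
    apply Filter.Tendsto.div_const
    apply Real.tendsto_exp_atBot.comp
    have h1 : Filter.Tendsto (fun u : ℝ => u ^ 2 / 2) Filter.atTop Filter.atTop := by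
      apply Filter.Tendsto.atTop_div_const (by norm_num)
      exact tendsto_pow_atTop (by norm_num)
    have := tendsto_neg_atTop_atBot.comp h1
    convert this using 2 with u
    simp [Function.comp]
    ring
  apply squeeze_zero (fun u => div_nonneg (gauss_pos u).le (sfun_pos u).le)
    (g := fun u => gauss u / Real.sqrt (5/2))
  · intro u
    show gauss u / sfun u ≤ gauss u / Real.sqrt (5/2)
    apply div_le_div_of_nonneg_left (gauss_pos u).le (Real.sqrt_pos.2 (by norm_num))
    unfold sfun
    exact Real.sqrt_le_sqrt (by nlinarith [sq_nonneg u])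
  · simpa using hg.div_const (Real.sqrt (5/2))

lemma Gfun_integrableOn {x : ℝ} (hx : 0 ≤ x) : IntegrableOn Gfun (Set.Ioi x) := by
  apply Integrable.mono' (gauss_integrable.integrableOn)
    (Gfun_measurable.aestronglyMeasurable.restrict)
  filter_upwards [ae_restrict_mem measurableSet_Ioi] with u hu
  have hu0 : 0 ≤ u := le_trans hx (le_of_lt hu)
  rw [Real.norm_eq_abs, abs_le]
  constructor
  · linarith [neg_Gfun_le hu0]
  · linarith [Gfun_nonpos hu0, (gauss_pos u).le]

lemma tail_lb {x : ℝ} (hx : 0 ≤ x) : Ffun x ≤ Tl x := by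
  have hftc : ∫ u in Set.Ioi x, Gfun u = 0 - Ffun x := by
    apply integral_Ioi_of_hasDerivAt_of_tendsto
      ((Ffun_hasDeriv x).continuousAt.continuousWithinAt)
      (fun u _ => Ffun_hasDeriv u) (Gfun_integrableOn hx) Ffun_tendsto
  have hmono : ∫ u in Set.Ioi x, -Gfun u ≤ ∫ u in Set.Ioi x, gauss u := by
    apply setIntegral_mono_on ((Gfun_integrableOn hx).neg) gauss_integrable.integrableOn
      measurableSet_Ioi
    intro u hu
    exact neg_Gfun_le (le_trans hx (le_of_lt hu))
  rw [integral_neg, hftc] at hmono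
  unfold Tl
  linarith

lemma exp5_lt : Real.exp 5 < 149 := by
  have h : Real.exp 1 ^ (5:ℕ) = Real.exp (5:ℕ) := Real.exp_one_pow 5
  have h2 : Real.exp 1 < 2.7182818286 := Real.exp_one_lt_d9
  have h3 : Real.exp 1 ^ (5:ℕ) < 2.7182818286 ^ (5:ℕ) := by
    apply pow_lt_pow_left₀ h2 (Real.exp_pos 1).le
    norm_num
  rw [h] at h3
  norm_num at h3
  linarith

lemma exp5_gt : (125:ℝ) < Real.exp 5 := by
  have h : Real.exp 1 ^ (5:ℕ) = Real.exp (5:ℕ) := Real.exp_one_pow 5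
  have h2 : (2.7182818283:ℝ) < Real.exp 1 := Real.exp_one_gt_d9
  have h3 : (2.7182818283:ℝ) ^ (5:ℕ) < Real.exp 1 ^ (5:ℕ) := by
    apply pow_lt_pow_left₀ h2 (by norm_num)
    norm_num
  rw [h] at h3
  norm_num at h3
  nlinarith

lemma log5_le : Real.log 5 ≤ 5/3 := by
  have h : Real.log ((5:ℝ)^(3:ℕ)) = 3 * Real.log 5 := by
    rw [Real.log_pow]; norm_num
  have h2 : Real.log ((5:ℝ)^(3:ℕ)) ≤ 5 := by
    rw [Real.log_le_iff_le_exp (by norm_num)]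
    norm_num
    linarith [exp5_gt]
  rw [h] at h2
  linarith

lemma log_ge_one {K : ℝ} (hK : 5 ≤ K) : 1 ≤ Real.log K := by
  rw [Real.le_log_iff_exp_le (by linarith)]
  have := Real.exp_one_lt_d9
  linarith

lemma four_pi_log_le {K : ℝ} (hK : 5 ≤ K) : 4 * Real.pi * Real.log K ≤ K ^ 2 := by
  have hlog5 := log5_le
  have h1 : Real.log K ≤ K/5 + 2/3 := by
    have : Real.log (K/5) ≤ K/5 - 1 := Real.log_le_sub_one_of_pos (by linarith)
    have h2 : Real.log (K/5) = Real.log K - Real.log 5 := Real.log_div (by linarith) (by norm_num)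
    linarith
  have hpi := Real.pi_lt_d2
  have hpi2 := Real.pi_gt_three
  have hlogpos : (0:ℝ) ≤ Real.log K := by linarith [log_ge_one hK]
  nlinarith [sq_nonneg (K - 5)]

lemma log_four_pi_log_ge {K : ℝ} (hK : 5 ≤ K) : 5/2 ≤ Real.log (4 * Real.pi * Real.log K) := by
  have hlog1 := log_ge_one hK
  have hpi := Real.pi_gt_d6
  have hpos : 0 < 4 * Real.pi * Real.log K := by nlinarith
  rw [Real.le_log_iff_exp_le hpos]
  have hsq : Real.exp (5/2) * Real.exp (5/2) = Real.exp 5 := by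
    rw [← Real.exp_add]; norm_num
  have h5 := exp5_lt
  have hp := Real.exp_pos (5/2 : ℝ)
  have hlt : Real.exp (5/2) < 12.3 := by nlinarith
  nlinarith

lemma crux {K : ℝ} (hK : 5 ≤ K) :
    1/K ≤ Ffun (Real.sqrt (Real.log (K ^ 2 / (4 * Real.pi * Real.log K)))) := by
  set L := Real.log (K ^ 2 / (4 * Real.pi * Real.log K)) with hLdef
  have hlog1 := log_ge_one hK
  have hpi := Real.pi_gt_three
  have hK0 : (0:ℝ) < K := by linarith
  have hden : 0 < 4 * Real.pi * Real.log K := by nlinarith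
  have hL_eq : L = 2 * Real.log K - Real.log (4 * Real.pi * Real.log K) := by
    rw [hLdef, Real.log_div (by positivity) (ne_of_gt hden)]
    congr 1
    rw [show K ^ 2 = K ^ (2:ℕ) by norm_num, Real.log_pow]
    norm_num
  have hlog4pi : Real.log (4 * Real.pi * Real.log K) ≤ 2 * Real.log K := by
    have h := four_pi_log_le hK
    have h2 : Real.log (4 * Real.pi * Real.log K) ≤ Real.log (K ^ 2) := by
      gcongr
    rw [show K ^ 2 = K ^ (2:ℕ) by norm_num, Real.log_pow] at h2
    norm_num at h2
    linarith
  have hL_nonneg : 0 ≤ L := by rw [hL_eq]; linarith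
  have hexpL : Real.exp L = K ^ 2 / (4 * Real.pi * Real.log K) :=
    Real.exp_log (by positivity)
  set a := Real.sqrt L with hadef
  have ha2 : a ^ 2 = L := Real.sq_sqrt hL_nonneg
  have hsfun : sfun a = Real.sqrt (L + 5/2) := by
    unfold sfun; rw [ha2]
  have hgauss : gauss a = Real.exp (-L/2) / Real.sqrt (2 * Real.pi) := by
    unfold gauss; rw [ha2]
  unfold Ffun
  rw [hsfun, hgauss]
  have hLle : L + 5/2 ≤ 2 * Real.log K := by
    have := log_four_pi_log_ge hK
    rw [hL_eq]; linarith
  -- key squared inequality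
  have hsq_le : 2 * Real.pi * (L + 5/2) ≤ (K * Real.exp (-L/2)) ^ 2 := by
    have hexp : Real.exp (-L/2) ^ 2 = Real.exp (-L) := by
      rw [← Real.exp_nat_mul]
      norm_num
      ring_nf
    have hexpneg : Real.exp (-L) = (4 * Real.pi * Real.log K) / K ^ 2 := by
      rw [Real.exp_neg, hexpL]
      field_simp
    rw [mul_pow, hexp, hexpneg]
    rw [mul_div_assoc', mul_comm (K^2), mul_div_assoc]
    rw [div_self (by positivity), mul_one]
    nlinarith
  have hsqrt_le : Real.sqrt (2 * Real.pi) * Real.sqrt (L + 5/2) ≤ K * Real.exp (-L/2) := by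
    rw [← Real.sqrt_mul (by positivity)]
    have h1 : Real.sqrt (2 * Real.pi * (L + 5/2)) ≤ Real.sqrt ((K * Real.exp (-L/2)) ^ 2) :=
      Real.sqrt_le_sqrt hsq_le
    rwa [Real.sqrt_sq (by positivity)] at h1
  rw [div_div]
  rw [div_le_div_iff₀ hK0 (by positivity)]
  calc 1 * (Real.sqrt (2 * Real.pi) * Real.sqrt (L + 5/2))
      = Real.sqrt (2 * Real.pi) * Real.sqrt (L + 5/2) := by ring
    _ ≤ K * Real.exp (-L/2) := hsqrt_le
    _ = Real.exp (-L/2) * K := by ring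

/-- refined Gaussian CDF tail estimate for `p = 1 - 1/K`, `K ≥ 5`. -/
theorem stmt12 (K η : ℝ) (hK : 5 ≤ K) (hη : 1 ≤ η) :
    1 - (1 / K) * Real.sqrt (Real.pi / 2) * Real.exp (-η ^ 2 / 2) *
        Real.exp (-η * Real.sqrt (Real.log (K ^ 2 / (4 * Real.pi * Real.log K))))
      ≤ stdPhi (stdPhiInv (1 - 1 / K) + η) := by
  have hK0 : (0:ℝ) < K := by linarith
  have hp0 : 0 < 1 - 1/K := by
    have : 1/K ≤ 1/5 := by
      apply div_le_div_of_nonneg_left (by norm_num) (by norm_num) hK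
    linarith
  have hp1 : 1 - 1/K < 1 := by
    have : 0 < 1/K := by positivity
    linarith
  have hex : ∃ x, stdPhi x = 1 - 1/K := exists_stdPhi_eq hp0 hp1
  set x₀ := stdPhiInv (1 - 1/K) with hx₀def
  have hx₀ : stdPhi x₀ = 1 - 1/K := by
    rw [hx₀def]
    unfold stdPhiInv
    rw [dif_pos hex]
    exact hex.choose_spec
  have hTx₀ : Tl x₀ = 1/K := by
    have h := Tl_add x₀
    have h2 : (∫ u in Set.Iic x₀, gauss u) = stdPhi x₀ := rfl
    rw [h2, hx₀] at h
    linarith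
  set L := Real.log (K ^ 2 / (4 * Real.pi * Real.log K)) with hLdef
  set a := Real.sqrt L with hadef
  have ha0 : 0 ≤ a := Real.sqrt_nonneg L
  have hcrux : 1/K ≤ Ffun a := crux hK
  have hTa : 1/K ≤ Tl a := le_trans hcrux (tail_lb ha0)
  have hax₀ : a ≤ x₀ := by
    by_contra h
    push_neg at h
    have := Tl_lt h
    rw [hTx₀] at this
    linarith
  have hx₀0 : 0 ≤ x₀ := le_trans ha0 hax₀
  have hshift := Tl_shift x₀ η (by linarith)
  rw [hTx₀] at hshift
  have hTl_goal : stdPhi (x₀ + η) = 1 - Tl (x₀ + η) := by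
    have h := Tl_add (x₀ + η)
    have h2 : (∫ u in Set.Iic (x₀ + η), gauss u) = stdPhi (x₀ + η) := rfl
    rw [h2] at h
    linarith
  rw [hTl_goal]
  have hexp_split : Real.exp (-(η * x₀) - η ^ 2 / 2)
      = Real.exp (-(η * x₀)) * Real.exp (-η ^ 2 / 2) := by
    rw [← Real.exp_add]; ring_nf
  have hmono : Real.exp (-(η * x₀)) ≤ Real.exp (-η * a) := by
    apply Real.exp_le_exp.2
    nlinarith
  have hsqrt_ge : (1:ℝ) ≤ Real.sqrt (Real.pi / 2) := by
    rw [show (1:ℝ) = Real.sqrt 1 by simp]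
    apply Real.sqrt_le_sqrt
    linarith [Real.pi_gt_three]
  have hfinal : Tl (x₀ + η) ≤ (1 / K) * Real.sqrt (Real.pi / 2) * Real.exp (-η ^ 2 / 2) *
      Real.exp (-η * a) := by
    calc Tl (x₀ + η) ≤ Real.exp (-(η * x₀) - η ^ 2 / 2) * (1/K) := hshift
      _ = (1/K) * Real.exp (-η ^ 2 / 2) * Real.exp (-(η * x₀)) := by
          rw [hexp_split]; ring
      _ ≤ (1/K) * Real.exp (-η ^ 2 / 2) * Real.exp (-η * a) := by
          apply mul_le_mul_of_nonneg_left hmono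
          positivity
      _ ≤ (1 / K) * Real.sqrt (Real.pi / 2) * Real.exp (-η ^ 2 / 2) * Real.exp (-η * a) := by
          have hpos : 0 < 1/K * Real.exp (-η ^ 2 / 2) * Real.exp (-η * a) := by positivity
          nlinarith [mul_nonneg (sub_nonneg.2 hsqrt_ge) hpos.le]
  linarith

end
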